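/- Let G be a finite group with Φ(G) = E(G) = 1, written G = F(G) ⋊ L. Let A be an abelian subgroup of G with A ∩ F(G) = 1, and suppose A acts semisimply on F(G) (i.e., F(G) is a direct product of minimal normal subgroups of F(G)⋊A). Then there exists x ∈ F(G) with A ∩ A^x = 1; in particular b(G,A) ≤ 2. -/

import Mathlib

/-- The conjugate subgroup `g⁻¹ H g`. -/
def conjSub {G : Type*} [Group G] (H : Subgroup G) (g : G) : Subgroup G :=
  H.map (MulAut.conj g).toMonoidHom

/-- `K` is a subnormal subgroup of `G`. -/
def IsSubnormal {G : Type*} [Group G] (K : Subgroup G) : Prop :=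
  ∃ (n : ℕ) (c : ℕ → Subgroup G), c 0 = K ∧ c n = ⊤ ∧
    ∀ i < n, c i ≤ c (i + 1) ∧ ((c i).subgroupOf (c (i + 1))).Normal

/-- A group is quasisimple if it is perfect and its central quotient is simple. -/
def IsQuasisimple (K : Type*) [Group K] : Prop :=
  commutator K = ⊤ ∧ IsSimpleGroup (K ⧸ Subgroup.center K)

/-- The layer `E(G)` is trivial. -/
def TrivialLayer (G : Type*) [Group G] : Prop :=
  ∀ K : Subgroup G, IsSubnormal K → IsQuasisimple K → K = ⊥

/-- `F` is the Fitting subgroup of `G`: the largest nilpotent normal subgroup. -/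
def IsFitting {G : Type*} [Group G] (F : Subgroup G) : Prop :=
  F.Normal ∧ Group.IsNilpotent F ∧
    ∀ N : Subgroup G, N.Normal → Group.IsNilpotent N → N ≤ F

/-- `M` is a minimal normal subgroup of `F ⋊ A` (i.e. a minimal nontrivial subgroup of
`F` invariant under conjugation by all elements of `⟨F, A⟩`). -/
def IsMinFANormal {G : Type*} [Group G] (F A M : Subgroup G) : Prop :=
  M ≤ F ∧ M ≠ ⊥ ∧ (∀ g ∈ F ⊔ A, ∀ x ∈ M, g * x * g⁻¹ ∈ M) ∧
    ∀ M' : Subgroup G, M' ≤ M → M' ≠ ⊥ →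
      (∀ g ∈ F ⊔ A, ∀ x ∈ M', g * x * g⁻¹ ∈ M') → M' = M

section Helpers

open Subgroup

variable {G : Type*} [Group G]

/-- In a nilpotent group, a nontrivial normal subgroup meets the center nontrivially. -/
lemma aux_inf_center_ne_bot [hn : Group.IsNilpotent G] {N : Subgroup G} (hN : N.Normal)
    (h : N ≠ ⊥) : N ⊓ Subgroup.center G ≠ ⊥ := by
  obtain ⟨n, hc⟩ := hn
  have key : ∀ j, N ⊓ Subgroup.upperCentralSeries G j ≠ ⊥ → N ⊓ Subgroup.center G ≠ ⊥ := by
    intro j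
    induction j with
    | zero => intro hj; simp [Subgroup.upperCentralSeries_zero] at hj
    | succ m ih =>
      intro hj
      by_cases hm : N ⊓ Subgroup.upperCentralSeries G m = ⊥
      · have hle : N ⊓ Subgroup.upperCentralSeries G (m+1) ≤ N ⊓ Subgroup.center G := by
          intro x hx
          refine ⟨hx.1, Subgroup.mem_center_iff.mpr fun y => ?_⟩
          have hcomm : x * y * x⁻¹ * y⁻¹ ∈ N ⊓ Subgroup.upperCentralSeries G m := by
            constructor
            · have : x * (y * x⁻¹ * y⁻¹) ∈ N :=
                N.mul_mem hx.1 (by simpa [mul_assoc] using hN.conj_mem x⁻¹ (N.inv_mem hx.1) y)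
              simpa [mul_assoc] using this
            · exact (Subgroup.mem_upperCentralSeries_succ_iff).mp hx.2 y
          rw [hm] at hcomm
          have h1 : x * y * x⁻¹ * y⁻¹ = 1 := by simpa using hcomm
          have h2 := (commutatorElement_eq_one_iff_mul_comm (g₁ := x) (g₂ := y)).mp (by
            simpa [commutatorElement_def] using h1)
          rw [h2]
        intro hbot
        rw [hbot, le_bot_iff] at hle
        exact hj hle
      · exact ih hm
  exact key n (by rwa [hc, inf_top_eq])

/-- Conjugation criterion for `subgroupOf` normality. -/
lemma aux_subgroupOf_normal_of_conj {S T : Subgroup G}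
    (h : ∀ t ∈ T, ∀ s ∈ S, t * s * t⁻¹ ∈ S) : (S.subgroupOf T).Normal := by
  constructor
  intro x hx g
  rw [Subgroup.mem_subgroupOf] at hx ⊢
  simpa using h g g.2 x hx

lemma aux_conj_mem_of_subgroupOf_normal {S T : Subgroup G} (hle : S ≤ T)
    (hn : (S.subgroupOf T).Normal) {t s : G} (ht : t ∈ T) (hs : s ∈ S) :
    t * s * t⁻¹ ∈ S := by
  have := hn.conj_mem ⟨s, hle hs⟩ (by rwa [Subgroup.mem_subgroupOf]) ⟨t, ht⟩
  rw [Subgroup.mem_subgroupOf] at this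
  simpa using this

/-- If `g` maps `M` into itself by conjugation and `G` is finite, then so does `g⁻¹`. -/
lemma aux_conj_inv_mem [Finite G] {M : Subgroup G} {g : G}
    (hg : ∀ m ∈ M, g * m * g⁻¹ ∈ M) : ∀ m ∈ M, g⁻¹ * m * g ∈ M := by
  have hinj : Function.Injective (fun m : M => (⟨g * m * g⁻¹, hg m m.2⟩ : M)) := by
    intro a b hab
    have h1 : g * (a : G) * g⁻¹ = g * (b : G) * g⁻¹ := congrArg Subtype.val hab
    exact Subtype.ext (mul_left_cancel (mul_right_cancel h1))
  have hsurj := (Finite.injective_iff_surjective).mp hinj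
  intro m hm
  obtain ⟨a, ha⟩ := hsurj ⟨m, hm⟩
  have h1 : g * (a : G) * g⁻¹ = m := congrArg Subtype.val ha
  have h2 : g⁻¹ * m * g = (a : G) := by rw [← h1]; group
  rw [h2]; exact a.2

/-- Existence of the `p`-core of a subgroup `M`. -/
lemma aux_pcore_exists [Finite G] (p : ℕ) (M : Subgroup G) :
    ∃ U : Subgroup G, U ≤ M ∧ IsPGroup p U ∧
      (∀ T : Subgroup G, T ≤ M → IsPGroup p T →
        (∀ m ∈ M, ∀ t ∈ T, m * t * m⁻¹ ∈ T) → T ≤ U) ∧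
      (∀ g : G, (∀ m ∈ M, g * m * g⁻¹ ∈ M) → ∀ u ∈ U, g * u * g⁻¹ ∈ U) := by
  classical
  set P : Set (Subgroup G) :=
    {T | T ≤ M ∧ IsPGroup p T ∧ ∀ m ∈ M, ∀ t ∈ T, m * t * m⁻¹ ∈ T} with hP
  have hbot : (⊥ : Subgroup G) ∈ P := by
    refine ⟨bot_le, IsPGroup.of_bot, ?_⟩
    intro m hm t ht
    rw [Subgroup.mem_bot] at ht
    simp [ht]
  have hsup : ∀ T₁ ∈ P, ∀ T₂ ∈ P, T₁ ⊔ T₂ ∈ P := by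
    rintro T₁ ⟨h₁M, h₁p, h₁i⟩ T₂ ⟨h₂M, h₂p, h₂i⟩
    have hinv : ∀ m ∈ M, ∀ t ∈ T₁ ⊔ T₂, m * t * m⁻¹ ∈ T₁ ⊔ T₂ := by
      intro m hm
      have hle : T₁ ⊔ T₂ ≤ (T₁ ⊔ T₂).comap (MulAut.conj m).toMonoidHom := by
        refine sup_le ?_ ?_
        · intro t ht
          simp only [Subgroup.mem_comap, MulEquiv.coe_toMonoidHom, MulAut.conj_apply]
          exact Subgroup.mem_sup_left (h₁i m hm t ht)
        · intro t ht
          simp only [Subgroup.mem_comap, MulEquiv.coe_toMonoidHom, MulAut.conj_apply]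
          exact Subgroup.mem_sup_right (h₂i m hm t ht)
      intro t ht
      have := hle ht
      simpa using this
    refine ⟨sup_le h₁M h₂M, ?_, hinv⟩
    haveI hn₂ : ((T₂.subgroupOf M)).Normal := aux_subgroupOf_normal_of_conj h₂i
    have hp₁ : IsPGroup p (T₁.subgroupOf M) := h₁p.comap_of_injective M.subtype Subtype.coe_injective
    have hp₂ : IsPGroup p (T₂.subgroupOf M) := h₂p.comap_of_injective M.subtype Subtype.coe_injective
    have hps : IsPGroup p ((T₁.subgroupOf M ⊔ T₂.subgroupOf M : Subgroup ↥M)) :=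
      IsPGroup.to_sup_of_normal_right hp₁ hp₂
    have hmap : (T₁.subgroupOf M ⊔ T₂.subgroupOf M).map M.subtype = T₁ ⊔ T₂ := by
      rw [Subgroup.map_sup, Subgroup.subgroupOf_map_subtype, Subgroup.subgroupOf_map_subtype,
        inf_eq_left.mpr h₁M, inf_eq_left.mpr h₂M]
    have := hps.map M.subtype
    rwa [hmap] at this
  obtain ⟨U, hU, hmax⟩ := Set.Finite.exists_maximalFor id P (Set.toFinite P) ⟨⊥, hbot⟩
  have hall : ∀ T ∈ P, T ≤ U := by
    intro T hT
    have h1 : T ⊔ U ∈ P := hsup T hT U hU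
    have h2 : U = T ⊔ U := le_antisymm le_sup_right (hmax h1 le_sup_right)
    exact le_sup_left.trans h2.ge
  refine ⟨U, hU.1, hU.2.1, fun T a b c => hall T ⟨a, b, c⟩, ?_⟩
  intro g hg u hu
  have hg' := aux_conj_inv_mem hg
  have hW : U.map (MulAut.conj g).toMonoidHom ∈ P := by
    refine ⟨?_, hU.2.1.map _, ?_⟩
    · rintro _ ⟨u', hu', rfl⟩
      simpa using hg _ (hU.1 hu')
    · intro m hm t ht
      obtain ⟨u', hu', rfl⟩ := ht
      simp only [MulEquiv.coe_toMonoidHom, MulAut.conj_apply]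
      have key : m * (g * u' * g⁻¹) * m⁻¹
          = g * ((g⁻¹ * m * g) * u' * (g⁻¹ * m * g)⁻¹) * g⁻¹ := by group
      rw [key]
      exact ⟨_, hU.2.2 _ (hg' m hm) u' hu', by simp⟩
  exact hall _ hW ⟨u, hu, by simp⟩

/-- A subnormal `p`-subgroup is contained in the Fitting subgroup. -/
lemma aux_subnormal_pgroup_le_fitting [Finite G] {p : ℕ} (hp : p.Prime) {F S : Subgroup G}
    (hF : IsFitting F) (hS : _root_.IsSubnormal S) (hpS : IsPGroup p S) : S ≤ F := by
  obtain ⟨n, c, h0, htop, hstep⟩ := hS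
  have key : ∀ i, i ≤ n → ∃ V : Subgroup G, S ≤ V ∧ V ≤ c i ∧ IsPGroup p V ∧
      ∀ g : G, (∀ m ∈ c i, g * m * g⁻¹ ∈ c i) → ∀ v ∈ V, g * v * g⁻¹ ∈ V := by
    intro i
    induction i with
    | zero =>
      intro _
      exact ⟨S, le_rfl, h0.ge, hpS, fun g hg v hv => by
        have := hg v (h0 ▸ hv); rwa [h0] at this⟩
    | succ j ih =>
      intro hj
      obtain ⟨V, hSV, hVc, hpV, hinv⟩ := ih (Nat.le_of_succ_le hj)
      obtain ⟨hle, hnorm⟩ := hstep j hj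
      obtain ⟨U, hUM, hpU, hmaxU, hUinv⟩ := aux_pcore_exists p (c (j + 1))
      have hVU : V ≤ U := by
        refine hmaxU V (hVc.trans hle) hpV ?_
        intro m hm v hv
        exact hinv m (fun x hx => aux_conj_mem_of_subgroupOf_normal hle hnorm hm hx) v hv
      exact ⟨U, hSV.trans hVU, hUM, hpU, hUinv⟩
  obtain ⟨V, hSV, -, hpV, hinv⟩ := key n le_rfl
  have hN : V.Normal := by
    constructor
    intro v hv g
    exact hinv g (fun m _ => by rw [htop]; trivial) v hv
  haveI : Fact p.Prime := ⟨hp⟩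
  have hnil : Group.IsNilpotent ↥V := hpV.isNilpotent
  exact hSV.trans (hF.2.2 V hN hnil)

/-- Transfer simplicity along a `MulEquiv`. -/
lemma aux_isSimpleGroup_of_mulEquiv {H K : Type*} [Group H] [Group K] (e : H ≃* K)
    [IsSimpleGroup H] : IsSimpleGroup K := by
  haveI : Nontrivial K := e.symm.toEquiv.nontrivial
  constructor
  intro T hT
  haveI : (T.comap e.toMonoidHom).Normal := hT.comap _
  rcases IsSimpleGroup.eq_bot_or_eq_top_of_normal (T.comap e.toMonoidHom) this with h | h
  · left
    have := congrArg (Subgroup.map e.toMonoidHom) h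
    rwa [Subgroup.map_comap_eq_self_of_surjective e.surjective, Subgroup.map_bot] at this
  · right
    have := congrArg (Subgroup.map e.toMonoidHom) h
    rwa [Subgroup.map_comap_eq_self_of_surjective e.surjective,
      Subgroup.map_top_of_surjective _ e.surjective] at this

lemma aux_conj_comm_of_comm {u v w : G} (h : (w⁻¹ * u * w) * v = v * (w⁻¹ * u * w)) :
    u * (w * v * w⁻¹) = (w * v * w⁻¹) * u := by
  have h2 := congrArg (fun t => w * t * w⁻¹) h
  simp only [mul_assoc, mul_inv_cancel_left, inv_mul_cancel_left, mul_inv_cancel,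
    inv_mul_cancel, mul_one] at h2
  simpa [mul_assoc] using h2

end Helpers

open Pointwise
open scoped commutatorElement

/-- Let `G` be a finite group with `Φ(G) = 1` and `E(G) = 1`, written `G = F(G) ⋊ L`.
If `A` is an abelian subgroup with `A ∩ F(G) = 1` acting semisimply on `F(G)` (i.e.
`F(G)` is a direct product of minimal normal subgroups of `F(G) ⋊ A`), then there is
`x ∈ F(G)` with `A ∩ A^x = 1`; in particular `b(G, A) ≤ 2`. -/
theorem stmt_10 {G : Type*} [Group G] [Finite G]
    (hΦ : frattini G = ⊥) (hE : TrivialLayer G)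
    (F L : Subgroup G) (hF : IsFitting F) (hL : F.IsComplement' L)
    (A : Subgroup G) (hab : ∀ x ∈ A, ∀ y ∈ A, x * y = y * x) (hAF : A ⊓ F = ⊥)
    (hss : ∃ (k : ℕ) (Nf : Fin k → Subgroup G),
      (∀ i, IsMinFANormal F A (Nf i)) ∧ (⨆ i, Nf i) = F ∧
      ∀ i, Nf i ⊓ (⨆ j ∈ {j | j ≠ i}, Nf j) = ⊥) :
    ∃ x ∈ F, A ⊓ conjSub A x = ⊥ := by
  classical
  obtain ⟨k, Nf, hmin, hsupF, hind⟩ := hss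
  have hFn : F.Normal := hF.1
  haveI : Group.IsNilpotent ↥F := hF.2.1
  -- Step A : F is abelian
  set W := Subgroup.map F.subtype (Subgroup.center ↥F) with hWdef
  have mem_W_iff : ∀ {y : G}, y ∈ W ↔ y ∈ F ∧ ∀ f ∈ F, f * y = y * f := by
    intro y
    constructor
    · rintro ⟨y', hy', rfl⟩
      refine ⟨y'.2, fun f hf => ?_⟩
      have := Subgroup.mem_center_iff.mp hy' ⟨f, hf⟩
      exact congrArg Subtype.val this
    · rintro ⟨h1, h2⟩
      exact ⟨⟨y, h1⟩, Subgroup.mem_center_iff.mpr fun g => Subtype.ext (h2 g g.2), rfl⟩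
  have hWinv : ∀ g : G, ∀ y ∈ W, g * y * g⁻¹ ∈ W := by
    intro g y hy
    obtain ⟨hyF, hyc⟩ := mem_W_iff.mp hy
    refine mem_W_iff.mpr ⟨hFn.conj_mem y hyF g, fun f hf => ?_⟩
    have hf' : g⁻¹ * f * g ∈ F := by
      have := hFn.conj_mem f hf g⁻¹; simpa using this
    exact aux_conj_comm_of_comm (hyc _ hf')
  have habF : ∀ x ∈ F, ∀ y ∈ F, x * y = y * x := by
    have hNW : ∀ i, Nf i ≤ W := by
      intro i
      obtain ⟨hNF, hNbot, hNinv, hNmin⟩ := hmin i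
      have hn : ((Nf i).subgroupOf F).Normal :=
        aux_subgroupOf_normal_of_conj
          (fun t ht s hs => hNinv t (Subgroup.mem_sup_left ht) s hs)
      have hnb : (Nf i).subgroupOf F ≠ ⊥ := by
        intro hbot
        apply hNbot
        have := congrArg (Subgroup.map F.subtype) hbot
        rwa [Subgroup.subgroupOf_map_subtype, inf_eq_left.mpr hNF, Subgroup.map_bot] at this
      have hcen := aux_inf_center_ne_bot hn hnb
      rw [Subgroup.ne_bot_iff_exists_ne_one] at hcen
      obtain ⟨⟨z, hz⟩, hzne⟩ := hcen
      have hzne1 : (z : G) ≠ 1 := fun h1 => hzne (Subtype.ext (Subtype.ext h1))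
      have hzM' : (z : G) ∈ Nf i ⊓ W :=
        ⟨(Subgroup.mem_subgroupOf).mp hz.1, ⟨z, hz.2, rfl⟩⟩
      have hM'ne : Nf i ⊓ W ≠ ⊥ := fun h => hzne1 (by rw [h] at hzM'; simpa using hzM')
      have hM'inv : ∀ g ∈ F ⊔ A, ∀ y ∈ Nf i ⊓ W, g * y * g⁻¹ ∈ Nf i ⊓ W :=
        fun g hg y hy => ⟨hNinv g hg y hy.1, hWinv g y hy.2⟩
      have := hNmin (Nf i ⊓ W) inf_le_left hM'ne hM'inv
      rw [← this]; exact inf_le_right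
    intro x hx y hy
    have hyW : y ∈ W := by
      have hFW : F ≤ W := by rw [← hsupF]; exact iSup_le hNW
      exact hFW hy
    exact (mem_W_iff.mp hyW).2 x hx
  -- Step B : centralizer of F
  set C := Subgroup.centralizer (F : Set G) with hCdef
  have hFC : F ≤ C := fun f hf =>
    Subgroup.mem_centralizer_iff.mpr fun h hh => habF h hh f hf
  have hCn : ∀ g : G, ∀ c ∈ C, g * c * g⁻¹ ∈ C := by
    intro g c hc
    refine Subgroup.mem_centralizer_iff.mpr fun f hf => ?_
    have hf' : g⁻¹ * f * g ∈ F := by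
      have := hFn.conj_mem f hf g⁻¹; simpa using this
    exact aux_conj_comm_of_comm ((Subgroup.mem_centralizer_iff.mp hc) _ hf')
  set K := C ⊓ L with hKdef
  have hKF : K ⊓ F = ⊥ := by
    have h1 : K ⊓ F ≤ L ⊓ F := inf_le_inf_right F inf_le_right
    have hd : L ⊓ F = ⊥ := disjoint_iff.mp hL.disjoint.symm
    exact le_bot_iff.mp (hd ▸ h1)
  have hdecomp : ∀ c ∈ C, ∃ f ∈ F, ∃ s ∈ K, c = f * s := by
    intro c hc
    obtain ⟨⟨f, l⟩, hfl, -⟩ := hL.existsUnique c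
    have hfF : (f : G) ∈ F := f.2
    have hlL : (l : G) ∈ L := l.2
    have hlC : (l : G) ∈ C := by
      have h2 : (l : G) = (f : G)⁻¹ * c := by rw [← hfl]; group
      rw [h2]; exact C.mul_mem (C.inv_mem (hFC hfF)) hc
    exact ⟨f, hfF, l, ⟨hlC, hlL⟩, hfl.symm⟩
  have hKC : ∀ x ∈ C, ∀ s ∈ K, x * s * x⁻¹ ∈ K := by
    intro x hx s hs
    obtain ⟨f, hf, t, ht, rfl⟩ := hdecomp x hx
    have h1 : t * s * t⁻¹ ∈ K := K.mul_mem (K.mul_mem ht hs) (K.inv_mem ht)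
    have h2 : (f * t) * s * (f * t)⁻¹ = f * (t * s * t⁻¹) * f⁻¹ := by group
    have hu : t * s * t⁻¹ ∈ C := h1.1
    have h3 : f * (t * s * t⁻¹) = (t * s * t⁻¹) * f :=
      Subgroup.mem_centralizer_iff.mp hu f hf
    have h4 : f * (t * s * t⁻¹) * f⁻¹ = t * s * t⁻¹ := by
      rw [h3, mul_assoc, mul_inv_cancel, mul_one]
    rw [h2, h4]; exact h1
  have hKsub : IsSubnormal K := by
    refine ⟨2, fun i => match i with | 0 => K | 1 => C | _ => ⊤, rfl, rfl, ?_⟩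
    intro i hi
    interval_cases i
    · exact ⟨inf_le_left, aux_subgroupOf_normal_of_conj fun t ht s hs => hKC t ht s hs⟩
    · exact ⟨le_top, aux_subgroupOf_normal_of_conj fun t _ s hs => hCn t s hs⟩
  -- Step C : K = ⊥
  have hKbot : K = ⊥ := by
    by_contra hKne
    obtain ⟨S, hSmem, hSmin⟩ := Set.Finite.exists_minimalFor id
      {S : Subgroup G | S ≠ ⊥ ∧ S ≤ K ∧ IsSubnormal S} (Set.toFinite _)
      ⟨K, hKne, le_rfl, hKsub⟩
    obtain ⟨hSne, hSK, hSsub⟩ := hSmem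
    haveI : Nontrivial ↥S := (Subgroup.nontrivial_iff_ne_bot S).mpr hSne
    have hsimple : ∀ T : Subgroup ↥S, T.Normal → T = ⊥ ∨ T = ⊤ := by
      intro T hT
      by_cases hTb : T.map S.subtype = ⊥
      · left
        have h2 : T ≤ S.subtype.ker := (Subgroup.map_eq_bot_iff T).mp hTb
        rw [Subgroup.ker_subtype] at h2
        exact le_bot_iff.mp h2
      · right
        have hmem : T.map S.subtype ∈
            {S : Subgroup G | S ≠ ⊥ ∧ S ≤ K ∧ IsSubnormal S} := by
          refine ⟨hTb, (Subgroup.map_subtype_le T).trans hSK, ?_⟩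
          obtain ⟨n, c, h0, htop, hstep⟩ := hSsub
          refine ⟨n + 1, fun i => match i with | 0 => T.map S.subtype | (j+1) => c j,
            rfl, htop, ?_⟩
          intro i hi
          match i, hi with
          | 0, _ =>
            constructor
            · show T.map S.subtype ≤ c 0
              rw [h0]; exact Subgroup.map_subtype_le T
            · show ((T.map S.subtype).subgroupOf (c 0)).Normal
              rw [h0, show (T.map S.subtype).subgroupOf S = T from
                Subgroup.comap_map_eq_self_of_injective Subtype.coe_injective T]
              exact hT
          | j + 1, hi => exact hstep j (by omega)
        have heq : S = T.map S.subtype :=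
            le_antisymm (hSmin hmem (Subgroup.map_subtype_le T)) (Subgroup.map_subtype_le T)
        have h2 : (⊤ : Subgroup ↥S).map S.subtype = S := by
          rw [← MonoidHom.range_eq_map, Subgroup.range_subtype]
        exact Subgroup.map_injective Subtype.coe_injective
          (heq.symm.trans h2.symm : T.map S.subtype = (⊤ : Subgroup ↥S).map S.subtype)
    haveI hSsimple : IsSimpleGroup ↥S := ⟨hsimple⟩
    by_cases hcomm : ∀ a b : ↥S, a * b = b * a
    · letI : CommGroup ↥S := { (inferInstance : Group ↥S) with mul_comm := hcomm }
      have hp : (Nat.card ↥S).Prime := IsSimpleGroup.prime_card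
      have hpS : IsPGroup (Nat.card ↥S) ↥S := IsPGroup.of_card (pow_one _).symm
      have hle := aux_subnormal_pgroup_le_fitting hp hF hSsub hpS
      have h5 : S ≤ K ⊓ F := le_inf hSK hle
      rw [hKF] at h5
      exact hSne (le_bot_iff.mp h5)
    · push_neg at hcomm
      obtain ⟨a, b, hab'⟩ := hcomm
      have hcom_top : commutator ↥S = ⊤ := by
        rcases hsimple (commutator ↥S) inferInstance with h | h
        · exfalso; apply hab'
          have h6 : ⁅a, b⁆ ∈ commutator ↥S :=
            Subgroup.commutator_mem_commutator (Subgroup.mem_top a) (Subgroup.mem_top b)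
          rw [h, Subgroup.mem_bot] at h6
          exact commutatorElement_eq_one_iff_mul_comm.mp h6
        · exact h
      have hcent : Subgroup.center ↥S = ⊥ := by
        rcases hsimple (Subgroup.center ↥S) inferInstance with h | h
        · exact h
        · exfalso; apply hab'
          have hbc : b ∈ Subgroup.center ↥S := by rw [h]; trivial
          exact Subgroup.mem_center_iff.mp hbc a
      have e : (↥S ⧸ Subgroup.center ↥S) ≃* ↥S :=
        (QuotientGroup.quotientMulEquivOfEq hcent).trans QuotientGroup.quotientBot
      have hq : IsQuasisimple ↥S := ⟨hcom_top, aux_isSimpleGroup_of_mulEquiv e.symm⟩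
      exact hSne (hE S hSsub hq)
  have hCF : C ≤ F := by
    intro c hc
    obtain ⟨f, hf, s, hs, rfl⟩ := hdecomp c hc
    rw [hKbot, Subgroup.mem_bot] at hs
    rw [hs, mul_one]; exact hf
  -- Step D : pick x and finish
  letI cF : CommGroup ↥F :=
    { (inferInstance : Group ↥F) with
      mul_comm := fun u v => Subtype.ext (habF u u.2 v v.2) }
  have hxi : ∀ i : Fin k, ∃ z : ↥F, (z : G) ∈ Nf i ∧ z ≠ 1 := by
    intro i
    have h7 := (hmin i).2.1
    rw [Subgroup.ne_bot_iff_exists_ne_one] at h7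
    obtain ⟨a, ha⟩ := h7
    refine ⟨⟨(a : G), (hmin i).1 a.2⟩, a.2, ?_⟩
    intro h1
    apply ha
    have h2 : ((a : G)) = 1 := congrArg Subtype.val h1
    exact Subtype.ext h2
  choose xi hxi1 hxi2 using hxi
  refine ⟨((∏ i, xi i : ↥F) : G), (∏ i, xi i : ↥F).2, ?_⟩
  rw [eq_bot_iff]
  rintro a' ⟨haA, haC⟩
  rw [Subgroup.mem_bot]
  set x : ↥F := ∏ i, xi i with hxdef
  obtain ⟨b, hbA, hba⟩ := haC
  have hba' : (x : G) * b * (x : G)⁻¹ = a' := by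
    simpa [MulAut.conj_apply] using hba
  have hbF : b⁻¹ * a' ∈ F := by
    rw [← hba']
    have h1 : b⁻¹ * ((x : G) * b * (x : G)⁻¹) = (b⁻¹ * (x : G) * b) * (x : G)⁻¹ := by group
    rw [h1]
    refine F.mul_mem ?_ (F.inv_mem x.2)
    have := hFn.conj_mem _ x.2 b⁻¹
    simpa using this
  have hbab : b⁻¹ * a' ∈ A ⊓ F := ⟨A.mul_mem (A.inv_mem hbA) haA, hbF⟩
  rw [hAF, Subgroup.mem_bot] at hbab
  have hbeq : b = a' := by rwa [inv_mul_eq_one] at hbab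
  rw [hbeq] at hba'
  have hax : a' * (x : G) * a'⁻¹ = (x : G) := by
    have h2 : (x : G) * a' = a' * (x : G) := by
      conv_rhs => rw [← hba']
      group
    rw [← h2, mul_assoc, mul_inv_cancel, mul_one]
  -- the conjugation homomorphism on F
  have hconjF : ∀ z : G, z ∈ F → a' * z * a'⁻¹ ∈ F := fun z hz => hFn.conj_mem z hz a'
  set φ : ↥F →* ↥F :=
    ((MulAut.conj a').toMonoidHom.comp F.subtype).codRestrict F
      (fun z => by simpa [MulAut.conj_apply] using hconjF z z.2) with hφdef
  have hφcoe : ∀ z : ↥F, (φ z : G) = a' * (z : G) * a'⁻¹ := by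
    intro z; simp [hφdef, MulAut.conj_apply]
  have hφx : φ x = x := Subtype.ext (by rw [hφcoe]; exact hax)
  have hcompeq : ∀ i, a' * (xi i : G) * a'⁻¹ = (xi i : G) := by
    intro i
    set z : Fin k → ↥F := fun j => φ (xi j) * (xi j)⁻¹ with hzdef
    have hzmem : ∀ j, (z j : G) ∈ Nf j := by
      intro j
      have hc1 : (φ (xi j) : G) ∈ Nf j := by
        rw [hφcoe]
        exact (hmin j).2.2.1 a' (Subgroup.mem_sup_right haA) _ (hxi1 j)
      have : (z j : G) = (φ (xi j) : G) * ((xi j) : G)⁻¹ := by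
        simp [hzdef]
      rw [this]
      exact (Nf j).mul_mem hc1 ((Nf j).inv_mem (hxi1 j))
    have hzprod : (∏ j, z j) = 1 := by
      rw [hzdef]
      rw [Finset.prod_mul_distrib, Finset.prod_inv_distrib, ← map_prod φ, ← hxdef, hφx,
        mul_inv_cancel]
    have hzi : z i = (∏ j ∈ Finset.univ.erase i, z j)⁻¹ := by
      have h8 := Finset.mul_prod_erase Finset.univ z (Finset.mem_univ i)
      rw [hzprod] at h8
      exact eq_inv_of_mul_eq_one_left h8
    have hmem2 : (z i : G) ∈ Nf i ⊓ (⨆ j ∈ {j | j ≠ i}, Nf j) := by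
      refine ⟨hzmem i, ?_⟩
      have hQ : z i ∈ (⨆ j ∈ {j | j ≠ i}, Nf j).subgroupOf F := by
        rw [hzi]
        refine Subgroup.inv_mem _ (Subgroup.prod_mem _ ?_)
        intro j hj
        have hji : j ≠ i := (Finset.mem_erase.mp hj).1
        have hle : Nf j ≤ ⨆ j' ∈ {j' | j' ≠ i}, Nf j' :=
          le_iSup₂ (f := fun j' (_ : j' ∈ {j' | j' ≠ i}) => Nf j') j hji
        rw [Subgroup.mem_subgroupOf]
        exact hle (hzmem j)
      rwa [Subgroup.mem_subgroupOf] at hQ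
    rw [hind i, Subgroup.mem_bot] at hmem2
    have hz1 : z i = 1 := by
      ext; exact hmem2
    have h9 : φ (xi i) = xi i := by
      have := hz1
      rw [hzdef] at this
      exact mul_inv_eq_one.mp this
    have := congrArg Subtype.val h9
    rw [hφcoe] at this
    exact this
  -- a' centralizes every Nf i, hence F
  have hNle : ∀ i, Nf i ≤ Subgroup.centralizer {a'} := by
    intro i
    obtain ⟨hNF, hNbot, hNinv, hNmin⟩ := hmin i
    have hM'ne : Nf i ⊓ Subgroup.centralizer {a'} ≠ ⊥ := by
      intro hbot
      apply hxi2 i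
      have hxmem : (xi i : G) ∈ Nf i ⊓ Subgroup.centralizer {a'} := by
        refine ⟨hxi1 i, Subgroup.mem_centralizer_singleton_iff.mpr ?_⟩
        have := hcompeq i
        calc (xi i : G) * a' = (a' * (xi i : G) * a'⁻¹) * a' := by rw [this]
          _ = a' * (xi i : G) := by group
      rw [hbot, Subgroup.mem_bot] at hxmem
      exact Subtype.ext hxmem
    have hM'inv : ∀ g ∈ F ⊔ A, ∀ y ∈ Nf i ⊓ Subgroup.centralizer {a'},
        g * y * g⁻¹ ∈ Nf i ⊓ Subgroup.centralizer {a'} := by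
      intro g hg y hy
      obtain ⟨hyN, hyc⟩ := hy
      have hyc' : Commute a' y := by
        have := Subgroup.mem_centralizer_singleton_iff.mp hyc
        exact this.symm
      have hg2 : g ∈ (F : Set G) * (A : Set G) := by
        rw [← Subgroup.normal_mul]; exact_mod_cast hg
      obtain ⟨f, hf, bb, hbb, rfl⟩ := hg2
      have hyb : bb * y * bb⁻¹ ∈ Nf i := hNinv bb (Subgroup.mem_sup_right hbb) y hyN
      have hcb : Commute a' bb := by
        have := hab a' haA bb hbb
        exact this
      have hybc : Commute a' (bb * y * bb⁻¹) := (hcb.mul_right hyc').mul_right hcb.inv_right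
      have heq : (f * bb) * y * (f * bb)⁻¹ = bb * y * bb⁻¹ := by
        have h3 : (f * bb) * y * (f * bb)⁻¹ = f * (bb * y * bb⁻¹) * f⁻¹ := by group
        rw [h3]
        have h4 := habF f hf _ (hNF hyb)
        rw [h4, mul_assoc, mul_inv_cancel, mul_one]
      rw [heq]
      exact ⟨hyb, Subgroup.mem_centralizer_singleton_iff.mpr hybc.symm.eq⟩
    have := hNmin _ inf_le_left hM'ne hM'inv
    rw [← this]; exact inf_le_right
  have haC' : a' ∈ C := by
    refine Subgroup.mem_centralizer_iff.mpr fun f hf => ?_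
    have hFle : F ≤ Subgroup.centralizer {a'} := by rw [← hsupF]; exact iSup_le hNle
    exact Subgroup.mem_centralizer_singleton_iff.mp (hFle hf)
  have hfin : a' ∈ A ⊓ F := ⟨haA, hCF haC'⟩
  rw [hAF, Subgroup.mem_bot] at hfin
  exact hfin
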